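/- Let q = 3^d with d odd, and let b, b' ∈ F_q. The curves E_b: y^2 = x^3 - x + b and E_{b'}: y^2 = x^3 - x + b' are isomorphic over F_q if and only if Tr(b) = Tr(b'), where Tr is the trace to F_3. -/

import Mathlib

/-- Frobenius as a `ZMod 3`-algebra automorphism of `F`. -/
noncomputable def frobAE (F : Type) [Field F] [Fintype F] [Algebra (ZMod 3) F] [CharP F 3] :
    F ≃ₐ[ZMod 3] F :=
  AlgEquiv.ofBijective
    { frobenius F 3 with
      commutes' := fun c => by
        show (frobenius F 3) (algebraMap (ZMod 3) F c) = _
        rw [frobenius_def, ← map_pow]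
        congr 1
        simpa using ZMod.pow_card c }
    ((Finite.injective_iff_bijective).mp (frobenius_inj F 3))

theorem trace_cube (F : Type) [Field F] [Fintype F] [Algebra (ZMod 3) F] [CharP F 3] (x : F) :
    Algebra.trace (ZMod 3) F (x ^ 3) = Algebra.trace (ZMod 3) F x := by
  simpa [frobAE, frobenius_def] using Algebra.trace_eq_of_algEquiv (frobAE F) x

/-- Artin–Schreier solvability: if the trace of `c` vanishes then `r³ - r = c` has a solution. -/
theorem AS_solvable (F : Type) [Field F] [Fintype F] [Algebra (ZMod 3) F] [CharP F 3]
    (c : F) (hc : Algebra.trace (ZMod 3) F c = 0) : ∃ r : F, r ^ 3 - r = c := by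
  classical
  haveI : Fact (Nat.Prime 3) := ⟨by norm_num⟩
  have key : ∀ x : ZMod 3, (algebraMap (ZMod 3) F x) ^ 3 = algebraMap (ZMod 3) F x := by
    intro x
    rw [← map_pow]
    congr 1
    simpa using ZMod.pow_card x
  let φ : F →+ F :=
    { toFun := fun r => r ^ 3 - r
      map_zero' := by simp
      map_add' := fun a b => by
        have h3 : (a + b) ^ 3 = a ^ 3 + b ^ 3 := add_pow_char (R := F) (p := 3) ..
        show (a + b) ^ 3 - (a + b) = (a ^ 3 - a) + (b ^ 3 - b)
        rw [h3]; ring }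
  let ψ : F →+ ZMod 3 := (Algebra.trace (ZMod 3) F).toAddMonoidHom
  have hker : Nat.card φ.ker = 3 := by
    have he : φ.ker ≃ ZMod 3 := by
      refine Equiv.symm (Equiv.ofBijective (fun c => ⟨algebraMap (ZMod 3) F c, ?_⟩) ⟨?_, ?_⟩)
      · show (algebraMap (ZMod 3) F c) ^ 3 - algebraMap (ZMod 3) F c = 0
        rw [key c, sub_self]
      · intro a b hab
        exact (algebraMap (ZMod 3) F).injective (by simpa using congrArg Subtype.val hab)
      · rintro ⟨x, hx⟩
        have hx' : x ^ 3 - x = 0 := hx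
        rw [sub_eq_zero] at hx'
        have : x * (x - 1) * (x + 1) = 0 := by linear_combination hx'
        rcases mul_eq_zero.mp this with h | h
        · rcases mul_eq_zero.mp h with h | h
          · exact ⟨0, by simp [Subtype.ext_iff, h.symm]⟩
          · exact ⟨1, by simp [Subtype.ext_iff, sub_eq_zero.mp h]⟩
        · refine ⟨-1, ?_⟩
          have : x = -1 := by linear_combination h
          simp [Subtype.ext_iff, this]
    rw [Nat.card_congr he, Nat.card_eq_fintype_card]
    simp
  have hsurj : Function.Surjective ψ := Algebra.trace_surjective (ZMod 3) F
  have h1 : Nat.card F = Nat.card φ.range * 3 := by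
    rw [AddSubgroup.card_eq_card_quotient_mul_card_addSubgroup φ.ker, ← hker,
      Nat.card_congr (QuotientAddGroup.quotientKerEquivRange φ).toEquiv]
  have h2 : Nat.card F = Nat.card ψ.ker * 3 := by
    rw [AddSubgroup.card_eq_card_quotient_mul_card_addSubgroup ψ.ker,
      Nat.card_congr (QuotientAddGroup.quotientKerEquivOfSurjective ψ hsurj).toEquiv]
    rw [Nat.card_eq_fintype_card (α := ZMod 3)]
    simp [mul_comm]
  have hle : φ.range ≤ ψ.ker := by
    rintro x ⟨r, rfl⟩
    show Algebra.trace (ZMod 3) F (r ^ 3 - r) = 0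
    rw [map_sub, trace_cube, sub_self]
  have heq : φ.range = ψ.ker := by
    apply AddSubgroup.eq_of_le_of_card_ge hle
    omega
  have hmem : c ∈ φ.range := heq ▸ hc
  obtain ⟨r, hr⟩ := hmem
  exact ⟨r, hr⟩

/-- The Weierstrass curve `y² = x³ - x + b`. -/
def Eb (F : Type) [Field F] (b : F) : WeierstrassCurve F :=
  { a₁ := 0, a₂ := 0, a₃ := 0, a₄ := -1, a₆ := b }

theorem typeI_isomorphic_iff_trace_eq_odd
    (d : ℕ) (hd : Odd d) (F : Type) [Field F] [Fintype F] [Algebra (ZMod 3) F]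
    (hF : Fintype.card F = 3 ^ d) (b b' : F) :
    (∃ C : WeierstrassCurve.VariableChange F, C • Eb F b = Eb F b') ↔
      Algebra.trace (ZMod 3) F b = Algebra.trace (ZMod 3) F b' := by
  classical
  haveI : CharP F 3 := charP_of_injective_algebraMap (algebraMap (ZMod 3) F).injective 3
  have h3 : (3 : F) = 0 := by exact_mod_cast CharP.cast_eq_zero F 3
  constructor
  · rintro ⟨C, hC⟩
    have h1 := congrArg WeierstrassCurve.a₁ hC
    have h3' := congrArg WeierstrassCurve.a₃ hC
    have h4 := congrArg WeierstrassCurve.a₄ hC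
    have h6 := congrArg WeierstrassCurve.a₆ hC
    simp only [WeierstrassCurve.variableChange_a₁, WeierstrassCurve.variableChange_a₂, WeierstrassCurve.variableChange_a₃, WeierstrassCurve.variableChange_a₄, WeierstrassCurve.variableChange_a₆, Eb] at h1 h3' h4 h6
    have hs : C.s = 0 := by
      rcases mul_eq_zero.mp h1 with h | h
      · exact absurd h (Units.ne_zero _)
      · linear_combination C.s * h3 - h
    have ht : C.t = 0 := by
      rcases mul_eq_zero.mp h3' with h | h
      · exact absurd (pow_eq_zero_iff (by norm_num)|>.mp h) (Units.ne_zero _)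
      · linear_combination C.t * h3 - h
    have hu4 : ((C.u⁻¹ : Fˣ) : F) ^ 4 = 1 := by
      linear_combination -h4 + C.r ^ 2 * ((C.u⁻¹ : Fˣ) : F) ^ 4 * h3
        - 2 * C.t * ((C.u⁻¹ : Fˣ) : F) ^ 4 * hs
    have hu4' : C.u ^ 4 = 1 := by
      have : (C.u⁻¹) ^ 4 = 1 := Units.ext (by rw [Units.val_pow_eq_pow_val]; exact hu4)
      rwa [inv_pow, inv_eq_one] at this
    have hdvd : orderOf C.u ∣ 2 := by
      have d1 : orderOf C.u ∣ 4 := orderOf_dvd_of_pow_eq_one hu4'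
      have d2 : orderOf C.u ∣ 3 ^ d - 1 := by
        have := orderOf_dvd_card (x := C.u)
        rwa [Fintype.card_units, hF] at this
      have hg : Nat.gcd 4 (3 ^ d - 1) = 2 := by
        obtain ⟨k, rfl⟩ := hd
        have h9 : (9 : ℕ) ^ k % 4 = 1 := by
          have : (9 : ℕ) ^ k ≡ 1 ^ k [MOD 4] := Nat.ModEq.pow k (by decide)
          simpa [Nat.ModEq] using this
        have h3d : (3 : ℕ) ^ (2 * k + 1) % 4 = 3 := by
          have : (3 : ℕ) ^ (2 * k + 1) = 9 ^ k * 3 := by rw [pow_succ, pow_mul]; norm_num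
          omega
        have hpos : 1 ≤ (3 : ℕ) ^ (2 * k + 1) := Nat.one_le_pow _ _ (by norm_num)
        obtain ⟨j, hj⟩ : ∃ j, 3 ^ (2 * k + 1) - 1 = 2 + 4 * j := ⟨3 ^ (2 * k + 1) / 4, by omega⟩
        rw [hj, Nat.gcd_add_mul_left_right 4 2 j]; rfl
      exact hg ▸ Nat.dvd_gcd d1 d2
    have hu2 : C.u ^ 2 = 1 := orderOf_dvd_iff_pow_eq_one.mp hdvd
    have hu6 : ((C.u⁻¹ : Fˣ) : F) ^ 6 = 1 := by
      have : (C.u⁻¹) ^ 6 = 1 := by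
        rw [inv_pow, inv_eq_one, show (6 : ℕ) = 2 * 3 by norm_num, pow_mul, hu2, one_pow]
      calc ((C.u⁻¹ : Fˣ) : F) ^ 6 = ((C.u⁻¹ ^ 6 : Fˣ) : F) := by push_cast; ring
      _ = 1 := by rw [this]; rfl
    have hb' : b' = b + (C.r ^ 3 - C.r) := by
      linear_combination -h6 + (b + C.r * -1 + C.r ^ 3 - C.t ^ 2) * hu6 - C.t * ht
    rw [hb', map_add, map_sub, trace_cube, sub_self, add_zero]
  · intro htr
    have hc : Algebra.trace (ZMod 3) F (b' - b) = 0 := by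
      rw [map_sub, htr, sub_self]
    obtain ⟨r, hr⟩ := AS_solvable F (b' - b) hc
    refine ⟨⟨1, r, 0, 0⟩, ?_⟩
    have hone : (((1 : Fˣ)⁻¹ : Fˣ) : F) = 1 := by simp
    ext <;> simp only [WeierstrassCurve.variableChange_a₁, WeierstrassCurve.variableChange_a₂, WeierstrassCurve.variableChange_a₃, WeierstrassCurve.variableChange_a₄, WeierstrassCurve.variableChange_a₆, Eb, hone]
    · ring
    · linear_combination r * h3
    · ring
    · linear_combination r ^ 2 * h3
    · linear_combination hr
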